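/- Let t ≥ 1 and n ≥ 1, let f : Fin t → ℕ → Bool be symmetric predicates and c : Fin t → Fin n → ℕ be wire multiplicities, and set B = 1 + max over i : Fin t of ∑ j, c i j. Then there exists a single symmetric predicate g : ℕ → Bool such that for every x : Fin n → Bool: (∀ i : Fin t, f i (∑ j, c i j * (if x j then 1 else 0)) = true) ↔ g (∑ j, (∑ i, B^(i:ℕ) * c i j) * (if x j then 1 else 0)) = true. Moreover the total number of new wires satisfies ∑ j, ∑ i, B^(i:ℕ) * c i j ≤ B^(t+1). -/

import Mathlib

lemma aux_sum_lt (B k : ℕ) (a : ℕ → ℕ) (ha : ∀ i < k, a i < B) :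
    (∑ i ∈ Finset.range k, B ^ i * a i) + 1 ≤ B ^ k := by
  induction k with
  | zero => simp
  | succ k ih =>
    rw [Finset.sum_range_succ]
    have h1 : (∑ i ∈ Finset.range k, B ^ i * a i) + 1 ≤ B ^ k :=
      ih (fun i hi => ha i (hi.trans (Nat.lt_succ_self k)))
    have h2 : a k + 1 ≤ B := ha k (Nat.lt_succ_self k)
    calc (∑ i ∈ Finset.range k, B ^ i * a i) + B ^ k * a k + 1
        ≤ B ^ k + B ^ k * a k := by omega
      _ = B ^ k * (a k + 1) := by ring
      _ ≤ B ^ k * B := Nat.mul_le_mul_left _ h2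
      _ = B ^ (k + 1) := by ring

lemma aux_digit (B t : ℕ) (s : ℕ → ℕ) (hs : ∀ i < t, s i < B) (k : ℕ) (hk : k < t) :
    (∑ i ∈ Finset.range t, B ^ i * s i) / B ^ k % B = s k := by
  have hB : 0 < B := Nat.pos_of_ne_zero (fun h => by simpa [h] using hs k hk)
  have hsplit : (∑ i ∈ Finset.range t, B ^ i * s i)
      = (∑ i ∈ Finset.Ico 0 (k + 1), B ^ i * s i)
        + ∑ i ∈ Finset.Ico (k + 1) t, B ^ i * s i := by
    rw [Finset.sum_Ico_consecutive _ (Nat.zero_le _) hk, Finset.range_eq_Ico]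
  have hhigh : ∑ i ∈ Finset.Ico (k + 1) t, B ^ i * s i
      = B ^ (k + 1) * ∑ i ∈ Finset.Ico (k + 1) t, B ^ (i - (k + 1)) * s i := by
    rw [Finset.mul_sum]
    refine Finset.sum_congr rfl (fun i hi => ?_)
    have h1 : k + 1 ≤ i := (Finset.mem_Ico.mp hi).1
    have : B ^ i = B ^ (k + 1) * B ^ (i - (k + 1)) := by
      rw [← pow_add]; congr 1; omega
    rw [this, mul_assoc]
  set L := ∑ i ∈ Finset.Ico 0 k, B ^ i * s i with hL
  set C := ∑ i ∈ Finset.Ico (k + 1) t, B ^ (i - (k + 1)) * s i with hC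
  have hlow : L < B ^ k := by
    have := aux_sum_lt B k s (fun i hi => hs i (hi.trans hk))
    rw [hL, Finset.range_eq_Ico] at *
    omega
  have hfin : (∑ i ∈ Finset.range t, B ^ i * s i)
      = L + B ^ k * (s k + B * C) := by
    rw [hsplit, hhigh, Finset.sum_Ico_succ_top (Nat.zero_le _), hL, hC]
    ring
  rw [hfin]
  have hpk : 0 < B ^ k := pow_pos hB k
  rw [Nat.add_mul_div_left _ _ hpk, Nat.div_eq_of_lt hlow, Nat.zero_add,
    Nat.add_mul_mod_self_left, Nat.mod_eq_of_lt (hs k hk)]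

/-- An AND of `t` symmetric gates collapses to a single symmetric gate via
base-`B` encoding of the individual wire counts, with at most `B^(t+1)` total new wires. -/
theorem and_of_sym_collapse
    (t n : ℕ) (ht : 1 ≤ t) (hn : 1 ≤ n)
    (f : Fin t → ℕ → Bool)
    (c : Fin t → Fin n → ℕ) :
    let B : ℕ := 1 + Finset.univ.sup (fun i : Fin t => ∑ j : Fin n, c i j)
    ∃ g : ℕ → Bool,
      (∀ x : Fin n → Bool,
        (∀ i : Fin t,
            f i (∑ j : Fin n, c i j * (if x j then 1 else 0)) = true) ↔
          g (∑ j : Fin n,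
              (∑ i : Fin t, B ^ (i : ℕ) * c i j) * (if x j then 1 else 0)) = true) ∧
      ∑ j : Fin n, ∑ i : Fin t, B ^ (i : ℕ) * c i j ≤ B ^ (t + 1) := by
  intro B
  have hBsup : ∀ i : Fin t, (∑ j : Fin n, c i j) < B := by
    intro i
    have : (∑ j : Fin n, c i j) ≤ Finset.univ.sup (fun i : Fin t => ∑ j : Fin n, c i j) :=
      Finset.le_sup (f := fun i : Fin t => ∑ j : Fin n, c i j) (Finset.mem_univ i)
    omega
  refine ⟨fun m => decide (∀ i : Fin t, f i (m / B ^ (i : ℕ) % B) = true), ?_, ?_⟩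
  · intro x
    set s : ℕ → ℕ := fun i => if h : i < t then ∑ j : Fin n, c ⟨i, h⟩ j * (if x j then 1 else 0) else 0 with hsdef
    have hsx : ∀ i < t, s i < B := by
      intro i hi
      have h1 : (∑ j : Fin n, c ⟨i, hi⟩ j * (if x j then 1 else 0)) ≤ ∑ j : Fin n, c ⟨i, hi⟩ j := by
        refine Finset.sum_le_sum (fun j _ => ?_)
        split <;> simp
      have := hBsup ⟨i, hi⟩
      simp only [hsdef, hi, dif_pos]
      omega
    have hswap : (∑ j : Fin n, (∑ i : Fin t, B ^ (i : ℕ) * c i j) * (if x j then 1 else 0))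
        = ∑ i ∈ Finset.range t, B ^ i * s i := by
      calc (∑ j : Fin n, (∑ i : Fin t, B ^ (i : ℕ) * c i j) * (if x j then 1 else 0))
          = ∑ j : Fin n, ∑ i : Fin t, B ^ (i : ℕ) * c i j * (if x j then 1 else 0) :=
            Finset.sum_congr rfl (fun j _ => Finset.sum_mul ..)
        _ = ∑ i : Fin t, ∑ j : Fin n, B ^ (i : ℕ) * c i j * (if x j then 1 else 0) :=
            Finset.sum_comm
        _ = ∑ i : Fin t, B ^ (i : ℕ) * s (i : ℕ) := by
            refine Finset.sum_congr rfl (fun i _ => ?_)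
            simp only [hsdef, i.isLt, dif_pos, Finset.mul_sum, mul_assoc]
        _ = ∑ i ∈ Finset.range t, B ^ i * s i :=
            Fin.sum_univ_eq_sum_range (fun i => B ^ i * s i) t
    rw [hswap]
    have hdig : ∀ i : Fin t,
        (∑ i ∈ Finset.range t, B ^ i * s i) / B ^ (i : ℕ) % B = s i :=
      fun i => aux_digit B t s hsx i i.isLt
    simp only [decide_eq_true_eq]
    constructor
    · intro h i
      rw [hdig i]
      simpa [hsdef, i.isLt] using h i
    · intro h i
      have := h i
      rw [hdig i] at this
      simpa [hsdef, i.isLt] using this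
  · have hswap : (∑ j : Fin n, ∑ i : Fin t, B ^ (i : ℕ) * c i j)
        = ∑ i ∈ Finset.range t, B ^ i * (if h : i < t then ∑ j : Fin n, c ⟨i, h⟩ j else 0) := by
      rw [← Fin.sum_univ_eq_sum_range]
      rw [Finset.sum_comm]
      refine Finset.sum_congr rfl (fun i _ => ?_)
      simp [i.isLt, Finset.mul_sum]
    rw [hswap]
    have hB1 : 1 ≤ B := by omega
    have h2 : (∑ i ∈ Finset.range t, B ^ i * (if h : i < t then ∑ j : Fin n, c ⟨i, h⟩ j else 0)) + 1 ≤ B ^ t :=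
      aux_sum_lt B t (fun i => if h : i < t then ∑ j : Fin n, c ⟨i, h⟩ j else 0)
        (fun i hi => by simp only [dif_pos hi]; exact hBsup ⟨i, hi⟩)
    have hpow : B ^ t ≤ B ^ (t + 1) := Nat.pow_le_pow_right hB1 (by omega)
    omega
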